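/- arXiv:1808.02311 — 3 statements merged into one kernel-verified Lean document; each statement's English description precedes it below -/
import Mathlib

section
/- Let p be a prime and N a positive integer. The matrices α_b = [[1, b], [0, p²]] for 0 ≤ b < p², β_h = [[p, h], [0, p]] for 0 < h < p, and σ = [[p², 0], [0, 1]] form a complete set of representatives for the right cosets Γ₀(N²)\{M ∈ M₂(ℤ) : det M = p², N² ∣ M₂₁, gcd of entries of M is a perfect square}, provided p ∤ N. -/
open Matrix

/-- The gcd of the four entries of an integral 2×2 matrix. -/
def entryGcd (A : Matrix (Fin 2) (Fin 2) ℤ) : ℕ :=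
  Nat.gcd (Nat.gcd (A 0 0).natAbs (A 0 1).natAbs) (Nat.gcd (A 1 0).natAbs (A 1 1).natAbs)

/-- The representatives `α_b = [[1,b],[0,p²]]` (`0 ≤ b < p²`),
`β_h = [[p,h],[0,p]]` (`0 < h < p`), `σ = [[p²,0],[0,1]]`. -/
def IsRep (p : ℕ) (R : Matrix (Fin 2) (Fin 2) ℤ) : Prop :=
  (∃ b : ℕ, b < p ^ 2 ∧ R = !![1, (b : ℤ); 0, (p : ℤ) ^ 2]) ∨
  (∃ h : ℕ, 0 < h ∧ h < p ∧ R = !![(p : ℤ), (h : ℤ); 0, (p : ℤ)]) ∨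
  R = !![(p : ℤ) ^ 2, 0; 0, 1]

private lemma mul2 (γ T : Matrix (Fin 2) (Fin 2) ℤ) (i j : Fin 2) :
    (γ * T) i j = γ i 0 * T 0 j + γ i 1 * T 1 j := by
  rw [Matrix.mul_apply, Fin.sum_univ_two]

/-- Hermite normal form for 2×2 integer matrices of positive determinant. -/
private lemma hnf (A : Matrix (Fin 2) (Fin 2) ℤ) (hdet : 0 < A.det) :
    ∃ (γ : Matrix (Fin 2) (Fin 2) ℤ) (a b d : ℤ), γ.det = 1 ∧ 0 < a ∧ 0 ≤ b ∧ b < d ∧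
      a * d = A.det ∧ A = γ * !![a, b; 0, d] := by
  have hA2 : A.det = A 0 0 * A 1 1 - A 0 1 * A 1 0 := Matrix.det_fin_two A
  have hne : ¬ (A 0 0 = 0 ∧ A 1 0 = 0) := by
    rintro ⟨h1, h2⟩; rw [h1, h2] at hA2; simp at hA2; omega
  have hgpos : 0 < Int.gcd (A 0 0) (A 1 0) :=
    Int.gcd_pos_iff.mpr (by by_contra h; push_neg at h; exact hne ⟨h.1, h.2⟩)
  set g : ℤ := (Int.gcd (A 0 0) (A 1 0) : ℤ) with hgdef
  have hgz : 0 < g := by rw [hgdef]; exact_mod_cast hgpos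
  set x := Int.gcdA (A 0 0) (A 1 0) with hx
  set y := Int.gcdB (A 0 0) (A 1 0) with hy
  have hbez : g = A 0 0 * x + A 1 0 * y := Int.gcd_eq_gcd_ab _ _
  obtain ⟨a', ha'⟩ : g ∣ A 0 0 := Int.gcd_dvd_left _ _
  obtain ⟨c', hc'⟩ : g ∣ A 1 0 := Int.gcd_dvd_right _ _
  have hdet1 : x * a' + y * c' = 1 := by
    have : g * (x * a' + y * c') = g * 1 := by
      rw [mul_one]; nth_rewrite 2 [hbez]; rw [ha', hc']; ring
    exact mul_left_cancel₀ (ne_of_gt hgz) this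
  set u₁ : Matrix (Fin 2) (Fin 2) ℤ := !![x, y; -c', a'] with hu₁def
  have hu₁ : u₁.det = 1 := by
    rw [hu₁def, Matrix.det_fin_two_of]; linarith
  have h10 : (u₁ * A) 1 0 = 0 := by
    rw [mul2]; rw [hu₁def]; simp; rw [ha', hc']; ring
  have h00 : (u₁ * A) 0 0 = g := by
    rw [mul2]; rw [hu₁def]; simp; linarith
  set b1 := (u₁ * A) 0 1 with hb1
  set d := (u₁ * A) 1 1 with hd1
  have hgd : g * d = A.det := by
    have hdu : (u₁ * A).det = A.det := by rw [Matrix.det_mul, hu₁, one_mul]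
    have : (u₁ * A).det = g * d - b1 * 0 := by
      rw [Matrix.det_fin_two, h00, h10, hb1, hd1]
    rw [this] at hdu; linarith
  have hd : 0 < d := by
    rcases mul_pos_iff.mp (hgd ▸ hdet) with ⟨_, h⟩ | ⟨h, _⟩
    · exact h
    · linarith
  set q := b1 / d with hq
  set r := b1 % d with hr
  have hr0 : 0 ≤ r := Int.emod_nonneg b1 (ne_of_gt hd)
  have hrd : r < d := Int.emod_lt_of_pos b1 hd
  set u₂ : Matrix (Fin 2) (Fin 2) ℤ := !![1, -q; 0, 1] with hu₂def
  have hu₂ : u₂.det = 1 := by rw [hu₂def, Matrix.det_fin_two_of]; ring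
  set u := u₂ * u₁ with hudef
  have hu : u.det = 1 := by rw [hudef, Matrix.det_mul, hu₂, hu₁, one_mul]
  have hkey : u * A = !![g, r; 0, d] := by
    rw [hudef, mul_assoc]
    ext i j
    fin_cases i <;> fin_cases j
    · simp [mul2, hu₂def, h00, h10]
    · simp [mul2, hu₂def, h00, h10, ← hb1, ← hd1]
      rw [hr, Int.emod_def]; ring
    · simp [mul2, hu₂def, h00, h10]
    · simp [mul2, hu₂def, ← hd1, h10]
  have hadj : A = u.adjugate * !![g, r; 0, d] := by
    rw [← hkey, ← mul_assoc, Matrix.adjugate_mul, hu, one_smul, Matrix.one_mul]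
  refine ⟨u.adjugate, g, r, d, ?_, hgz, hr0, hrd, hgd, hadj⟩
  rw [Matrix.det_adjugate, hu]; norm_num

private lemma rep_canon {p : ℕ} (hp : 1 < p) {R : Matrix (Fin 2) (Fin 2) ℤ}
    (h : IsRep p R) : ∃ α β δ : ℤ, 0 < α ∧ 0 ≤ β ∧ β < δ ∧ R = !![α, β; 0, δ] := by
  have hp0 : (0:ℤ) < (p:ℤ) := by exact_mod_cast Nat.lt_of_lt_of_le Nat.zero_lt_one hp.le
  rcases h with ⟨b, hb, rfl⟩ | ⟨h, h0, hhp, rfl⟩ | rfl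
  · exact ⟨1, b, (p:ℤ)^2, one_pos, by positivity, by exact_mod_cast hb, rfl⟩
  · exact ⟨p, h, p, hp0, by positivity, by exact_mod_cast hhp, rfl⟩
  · exact ⟨(p:ℤ)^2, 0, 1, by positivity, le_refl 0, one_pos, rfl⟩

private lemma rep_unique {p : ℕ} (hp : 1 < p) {R R' γ γ' : Matrix (Fin 2) (Fin 2) ℤ}
    (hR : IsRep p R) (hR' : IsRep p R') (hγ : γ.det = 1) (hγ' : γ'.det = 1)
    (heq : γ * R = γ' * R') : R' = R := by
  obtain ⟨α, β, δ, hα, hβ0, hβδ, rfl⟩ := rep_canon hp hR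
  obtain ⟨α', β', δ', hα', hβ0', hβδ', rfl⟩ := rep_canon hp hR'
  have hδ : 0 < δ := lt_of_le_of_lt hβ0 hβδ
  set u := γ'.adjugate * γ with hu
  have hud : u.det = 1 := by
    rw [hu, Matrix.det_mul, Matrix.det_adjugate, hγ, hγ']; norm_num
  have hkey : u * !![α, β; 0, δ] = !![α', β'; 0, δ'] := by
    rw [hu, mul_assoc, heq, ← mul_assoc, Matrix.adjugate_mul, hγ', one_smul, Matrix.one_mul]
  have e00 : u 0 0 * α + u 0 1 * 0 = α' := by
    have := congrFun (congrFun hkey 0) 0; rw [mul2] at this; simpa using this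
  have e01 : u 0 0 * β + u 0 1 * δ = β' := by
    have := congrFun (congrFun hkey 0) 1; rw [mul2] at this; simpa using this
  have e10 : u 1 0 * α + u 1 1 * 0 = 0 := by
    have := congrFun (congrFun hkey 1) 0; rw [mul2] at this; simpa using this
  have e11 : u 1 0 * β + u 1 1 * δ = δ' := by
    have := congrFun (congrFun hkey 1) 1; rw [mul2] at this; simpa using this
  have hu10 : u 1 0 = 0 := by
    rcases mul_eq_zero.mp (by linarith [e10] : u 1 0 * α = 0) with h | h
    · exact h
    · exact absurd h (ne_of_gt hα)
  have hudet2 : u 0 0 * u 1 1 = 1 := by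
    have := Matrix.det_fin_two u; rw [hud, hu10] at this; linarith [this]
  have hu00 : u 0 0 = 1 := by
    rcases Int.isUnit_iff.mp (IsUnit.of_mul_eq_one _ hudet2) with h | h
    · exact h
    · exfalso; rw [h] at e00; nlinarith
  have hu11 : u 1 1 = 1 := by rw [hu00] at hudet2; linarith
  have hαα : α' = α := by rw [hu00] at e00; linarith
  have hδδ : δ' = δ := by rw [hu10, hu11] at e11; linarith
  have hββ : β' = β := by
    rw [hu00] at e01
    have hb : β + u 0 1 * δ = β' := by linarith
    rcases lt_trichotomy (u 0 1) 0 with h | h | h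
    · exfalso
      have : u 0 1 ≤ -1 := by omega
      nlinarith
    · rw [h] at hb; linarith
    · exfalso
      have : 1 ≤ u 0 1 := by omega
      nlinarith
  rw [hαα, hββ, hδδ]

private lemma dvd_entryGcd {m : ℕ} {A : Matrix (Fin 2) (Fin 2) ℤ}
    (h : ∀ i j, (m:ℤ) ∣ A i j) : m ∣ entryGcd A := by
  have key : ∀ i j : Fin 2, m ∣ (A i j).natAbs := fun i j => by
    have := Int.natAbs_dvd_natAbs.mpr (h i j); simpa using this
  exact Nat.dvd_gcd (Nat.dvd_gcd (key 0 0) (key 0 1)) (Nat.dvd_gcd (key 1 0) (key 1 1))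

private lemma entryGcd_dvd (A : Matrix (Fin 2) (Fin 2) ℤ) (i j : Fin 2) :
    (entryGcd A : ℤ) ∣ A i j := by
  have : ∀ x : ℤ, entryGcd A ∣ x.natAbs → (entryGcd A : ℤ) ∣ x := fun x hx =>
    dvd_trans (Int.natCast_dvd_natCast.mpr hx) (Int.natAbs_dvd.mpr dvd_rfl)
  fin_cases i <;> fin_cases j
  · exact this _ ((Nat.gcd_dvd_left _ _).trans (Nat.gcd_dvd_left _ _))
  · exact this _ ((Nat.gcd_dvd_left _ _).trans (Nat.gcd_dvd_right _ _))
  · exact this _ ((Nat.gcd_dvd_right _ _).trans (Nat.gcd_dvd_left _ _))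
  · exact this _ ((Nat.gcd_dvd_right _ _).trans (Nat.gcd_dvd_right _ _))

private lemma entryGcd_eq_one {p : ℕ} (hp : p.Prime) {A : Matrix (Fin 2) (Fin 2) ℤ}
    (hdet : A.det = (p:ℤ)^2) (hsq : IsSquare (entryGcd A)) : entryGcd A = 1 := by
  set g := entryGcd A with hg
  have hdvd : (g:ℤ) * (g:ℤ) ∣ (p:ℤ)^2 := by
    rw [← hdet, Matrix.det_fin_two]
    exact dvd_sub (mul_dvd_mul (entryGcd_dvd A 0 0) (entryGcd_dvd A 1 1))
      (mul_dvd_mul (entryGcd_dvd A 0 1) (entryGcd_dvd A 1 0))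
  have hdvdn : g ^ 2 ∣ p ^ 2 := by
    have : ((g ^ 2 : ℕ) : ℤ) ∣ ((p ^ 2 : ℕ) : ℤ) := by push_cast; rw [sq]; exact_mod_cast hdvd
    exact_mod_cast this
  have hgp : g ∣ p := (Nat.pow_dvd_pow_iff (by norm_num)).mp hdvdn
  rcases (Nat.Prime.eq_one_or_self_of_dvd hp g hgp) with h | h
  · exact h
  · exfalso
    rw [h] at hsq
    obtain ⟨k, hk⟩ := hsq
    have hkp : k ∣ p := hk ▸ dvd_mul_right k k
    rcases hp.eq_one_or_self_of_dvd k hkp with h1 | h1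
    · rw [h1] at hk; simp at hk; exact hp.ne_one hk
    · rw [h1] at hk; nlinarith [hp.two_le]

/-- The matrices `α_b`, `β_h`, `σ` form a complete set of representatives for
`Γ₀(N²)\{M ∈ M₂(ℤ) : det M = p², N² ∣ M₂₁, gcd(M) = □}` when `p ∤ N`:
every such matrix `A` lies in `Γ₀(N²)·R` for exactly one representative `R`. -/
theorem hecke_coset_representatives (p N : ℕ) (hp : p.Prime) (hN : 0 < N)
    (hpN : ¬ p ∣ N) (A : Matrix (Fin 2) (Fin 2) ℤ)
    (hdet : A.det = (p : ℤ) ^ 2) (hA : (N : ℤ) ^ 2 ∣ A 1 0)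
    (hgcd : IsSquare (entryGcd A)) :
    ∃! R : Matrix (Fin 2) (Fin 2) ℤ, IsRep p R ∧
      ∃ γ : Matrix (Fin 2) (Fin 2) ℤ, γ.det = 1 ∧ (N : ℤ) ^ 2 ∣ γ 1 0 ∧ A = γ * R := by
  have hp1 : 1 < p := hp.one_lt
  have hp0 : (0:ℤ) < (p:ℤ) := by exact_mod_cast hp.pos
  have hdetpos : 0 < A.det := by rw [hdet]; positivity
  have hgcd1 : entryGcd A = 1 := entryGcd_eq_one hp hdet hgcd
  obtain ⟨γ, a, b, d, hγ, hapos, hb0, hbd, had, hAfact⟩ := hnf A hdetpos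
  have hdpos : 0 < d := lt_of_le_of_lt hb0 hbd
  rw [hdet] at had
  -- classification of a
  have hadvd : a.natAbs ∣ p ^ 2 := by
    have h1 : a ∣ (p:ℤ) ^ 2 := ⟨d, had.symm⟩
    have h2 : a.natAbs ∣ ((p:ℤ)^2).natAbs := Int.natAbs_dvd_natAbs.mpr h1
    simpa [Int.natAbs_pow] using h2
  obtain ⟨m, hm2, hma⟩ := (Nat.dvd_prime_pow hp).mp hadvd
  have haval : a = ((p : ℤ)) ^ m := by
    have := Int.natAbs_of_nonneg (le_of_lt hapos)
    rw [← this, hma]; push_cast; ring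
  -- the representative
  have hex : ∃ R : Matrix (Fin 2) (Fin 2) ℤ, IsRep p R ∧ !![a, b; 0, d] = R := by
    interval_cases m
    · -- a = 1, d = p², α_b
      rw [pow_zero] at haval
      have hdval : d = (p:ℤ)^2 := by rw [haval, one_mul] at had; exact had
      have hbnn : ((b.toNat : ℤ)) = b := Int.toNat_of_nonneg hb0
      refine ⟨!![1, (b.toNat : ℤ); 0, (p:ℤ)^2], Or.inl ⟨b.toNat, ?_, rfl⟩, ?_⟩
      · have : b < ((p^2 : ℕ) : ℤ) := by push_cast; rw [← hdval]; exact hbd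
        omega
      · rw [haval, hdval, hbnn]
    · -- a = p, d = p, β_h
      rw [pow_one] at haval
      have hdval : d = (p:ℤ) := by
        have had' := had
        rw [haval] at had'
        have h2 : (p:ℤ) * d = (p:ℤ) * (p:ℤ) := by rw [had']; ring
        exact mul_left_cancel₀ (ne_of_gt hp0) h2
      have hbnn : ((b.toNat : ℤ)) = b := Int.toNat_of_nonneg hb0
      have hbne : b ≠ 0 := by
        intro hb
        have hdvdall : ∀ i j, ((p:ℕ):ℤ) ∣ A i j := by
          intro i j
          rw [hAfact, mul2]
          apply dvd_add <;> apply Dvd.dvd.mul_left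
          · fin_cases j <;> simp [haval, hb]
          · fin_cases j <;> simp [hdval]
        have := dvd_entryGcd hdvdall
        rw [hgcd1] at this
        exact hp.ne_one (Nat.dvd_one.mp this)
      refine ⟨!![(p:ℤ), (b.toNat : ℤ); 0, (p:ℤ)], Or.inr (Or.inl ⟨b.toNat, ?_, ?_, rfl⟩), ?_⟩
      · omega
      · have : b < ((p : ℕ) : ℤ) := by rw [← hdval]; exact hbd
        omega
      · rw [haval, hdval, hbnn]
    · -- a = p², d = 1, σ
      have hdval : d = 1 := by
        have had' := had
        rw [haval] at had'
        have h2 : (p:ℤ)^2 * d = (p:ℤ)^2 * 1 := by rw [had']; ring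
        exact mul_left_cancel₀ (by positivity) h2
      have hbz : b = 0 := by omega
      exact ⟨!![(p:ℤ)^2, 0; 0, 1], Or.inr (Or.inr rfl), by rw [haval, hdval, hbz]⟩
  obtain ⟨R, hrep, hTR⟩ := hex
  -- Γ₀ condition
  have hc : A 1 0 = γ 1 0 * a := by rw [hAfact, mul2]; simp
  have hcop : IsCoprime ((N:ℤ)^2) a := by
    have hnat : Nat.Coprime (N^2) (p^2) :=
      Nat.Coprime.pow 2 2 ((hp.coprime_iff_not_dvd.mpr hpN).symm)
    have hnp : IsCoprime ((N:ℤ)^2) ((p:ℤ)^2) := by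
      have h3 : IsCoprime ((N^2 : ℕ) : ℤ) ((p^2 : ℕ) : ℤ) :=
        Int.isCoprime_iff_gcd_eq_one.mpr (by rw [Int.gcd_natCast_natCast]; exact hnat)
      push_cast at h3; exact h3
    exact hnp.of_isCoprime_of_dvd_right ⟨d, had.symm⟩
  have hΓ : (N:ℤ)^2 ∣ γ 1 0 := hcop.dvd_of_dvd_mul_right (hc ▸ hA)
  have hAR : A = γ * R := by rw [hAfact, hTR]
  refine ⟨R, ⟨hrep, γ, hγ, hΓ, hAR⟩, ?_⟩
  rintro R' ⟨hrep', γ'', hγ''det, -, hA''⟩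
  exact rep_unique hp1 hrep hrep' hγ hγ''det (hAR.symm.trans hA'')
end

section
/- Let N, p be positive integers with gcd(p, N) = 1, let α be an integer prime to p and let \overline{N²α} denote an integer inverse of N²α mod p. Then in SL₂(ℝ): [[0, -1/N],[N, 0]]⁻¹ · [[1, α/p],[0, 1]] · [[0, -1/(Np)],[Np, 0]] = [[p, \overline{N²α}],[-N²α, (1 - \overline{N²α}·N²α)/p]] · [[1, -\overline{N²α}/p],[0, 1]], and the first factor on the right lies in SL₂(ℤ) with lower-left entry divisible by N². -/
open Matrix

/-- The key matrix computation for the commutation of the Fricke involution with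
twisting/projection operators:
`[[0,-1/N],[N,0]]⁻¹ · [[1,α/p],[0,1]] · [[0,-1/(Np)],[Np,0]]
  = [[p, s],[-N²α, (1-sN²α)/p]] · [[1, -s/p],[0,1]]`
where `s` is an inverse of `N²α` mod `p`; and the first factor on the right is in
`SL₂(ℤ)` with lower-left entry divisible by `N²`. -/
theorem fricke_twist_matrix_identity (N p : ℕ) (hN : 0 < N) (hp : 0 < p)
    (hNp : Nat.Coprime p N) (α s : ℤ) (hα : ¬ (p : ℤ) ∣ α)
    (hs : (N : ℤ) ^ 2 * α * s ≡ 1 [ZMOD p]) :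
    ((!![0, -1 / (N : ℝ); (N : ℝ), 0])⁻¹ * !![1, (α : ℝ) / p; 0, 1] *
        !![0, -1 / ((N : ℝ) * p); (N : ℝ) * p, 0] =
      !![(p : ℝ), (s : ℝ); -(N : ℝ) ^ 2 * α, (1 - (s : ℝ) * (N : ℝ) ^ 2 * α) / p] *
        !![1, -(s : ℝ) / p; 0, 1]) ∧
    (∃ t : ℤ, 1 - s * (N : ℤ) ^ 2 * α = (p : ℤ) * t ∧
      (p : ℤ) * t - s * (-(N : ℤ) ^ 2 * α) = 1) ∧
    (N : ℤ) ^ 2 ∣ -(N : ℤ) ^ 2 * α := by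
  have hNne : (N : ℝ) ≠ 0 := Nat.cast_ne_zero.mpr hN.ne'
  have hpne : (p : ℝ) ≠ 0 := Nat.cast_ne_zero.mpr hp.ne'
  refine ⟨?_, ?_, ⟨-α, by ring⟩⟩
  · have hinv : (!![0, -1 / (N : ℝ); (N : ℝ), 0])⁻¹ = !![0, 1 / (N : ℝ); -(N : ℝ), 0] := by
      apply inv_eq_right_inv
      rw [Matrix.mul_fin_two, Matrix.one_fin_two]
      congr 1 <;> field_simp <;> simp
    rw [hinv, Matrix.mul_fin_two, Matrix.mul_fin_two, Matrix.mul_fin_two]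
    ext i j
    fin_cases i <;> fin_cases j <;> simp <;> field_simp <;> ring
  · obtain ⟨t, ht⟩ := (Int.ModEq.dvd hs : (p : ℤ) ∣ 1 - (N : ℤ) ^ 2 * α * s)
    exact ⟨t, by linarith, by linarith⟩
end

section
/- Let m be a positive integer and D = f²D₀ with D₀ < 0 a fundamental discriminant and f ∈ ℤ. If gcd(D, m) = 1 and D ≡ r² (mod 4m) for some integer r (i.e. D is a square mod 4m), then D₀ is also a square mod 4m; moreover one can choose r₀ with D₀ ≡ r₀² (mod 4m) and r ≡ f·r₀ (mod 2m). -/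
/-- `D` is a fundamental discriminant. -/
def IsFundamentalDiscriminant (D : ℤ) : Prop :=
  (D % 4 = 1 ∧ Squarefree D) ∨
  (D % 4 = 0 ∧ Squarefree (D / 4) ∧ ((D / 4) % 4 = 2 ∨ (D / 4) % 4 = 3))

/-- If `D = f²D₀` with `D₀ < 0` fundamental, `gcd(D,m) = 1` and `D ≡ r² (mod 4m)`,
then `D₀` is also a square mod `4m`; moreover one can choose `r₀` with
`D₀ ≡ r₀² (mod 4m)` and `r ≡ f·r₀ (mod 2m)`. -/
theorem fundamental_discriminant_square_mod (m : ℤ) (hm : 0 < m) (D₀ f : ℤ)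
    (hD₀ : D₀ < 0) (hfund : IsFundamentalDiscriminant D₀)
    (hcop : IsCoprime (f ^ 2 * D₀) m) (r : ℤ)
    (hsq : f ^ 2 * D₀ ≡ r ^ 2 [ZMOD 4 * m]) :
    ∃ r₀ : ℤ, D₀ ≡ r₀ ^ 2 [ZMOD 4 * m] ∧ r ≡ f * r₀ [ZMOD 2 * m] := by
  have hfm : IsCoprime f m :=
    (IsCoprime.pow_left_iff (by norm_num)).mp hcop.of_mul_left_left
  have h4 : 4 * m ∣ r ^ 2 - f ^ 2 * D₀ := Int.ModEq.dvd hsq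
  rcases Int.even_or_odd f with hf | hf
  · -- f even
    obtain ⟨f₁, hf₁⟩ := hf
    have hf₁' : f = 2 * f₁ := by omega
    have hmodd : Odd m := by
      rcases Int.even_or_odd m with hme | hmo
      · exfalso
        obtain ⟨k, hk⟩ := hme
        have := hfm.isUnit_of_dvd' (⟨f₁, hf₁'⟩ : (2:ℤ) ∣ f) (⟨k, by omega⟩ : (2:ℤ) ∣ m)
        rw [Int.isUnit_iff] at this
        omega
      · exact hmo
    obtain ⟨k, hk⟩ := hmodd
    have h2m : IsCoprime (2 : ℤ) m := ⟨-k, 1, by linarith⟩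
    have h4m : IsCoprime (4 : ℤ) m := by
      rw [show (4:ℤ) = 2 * 2 by norm_num]; exact h2m.mul_left h2m
    have hr2 : (2:ℤ) ∣ r := by
      have h44 : (4:ℤ) ∣ r ^ 2 - f ^ 2 * D₀ := dvd_trans ⟨m, rfl⟩ h4
      have h4f : (4:ℤ) ∣ f ^ 2 * D₀ := ⟨f₁ ^ 2 * D₀, by rw [hf₁']; ring⟩
      have h4r : (4:ℤ) ∣ r ^ 2 := by omega
      exact Int.prime_two.dvd_of_dvd_pow (dvd_trans (by norm_num) h4r)
    obtain ⟨r₁, hr₁⟩ := hr2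
    have key : m ∣ r₁ ^ 2 - f₁ ^ 2 * D₀ := by
      have h4' : (4:ℤ) * m ∣ 4 * (r₁ ^ 2 - f₁ ^ 2 * D₀) := by
        have e : r ^ 2 - f ^ 2 * D₀ = 4 * (r₁ ^ 2 - f₁ ^ 2 * D₀) := by
          rw [hr₁, hf₁']; ring
        rwa [e] at h4
      exact (mul_dvd_mul_iff_left (by norm_num : (4:ℤ) ≠ 0)).mp h4'
    have hf₁m : IsCoprime f₁ m := by
      have h2f : IsCoprime (2 * f₁) m := by rw [← hf₁']; exact hfm
      exact h2f.of_mul_left_right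
    obtain ⟨a, b, hab⟩ := hf₁m
    obtain ⟨u, v, huv⟩ := h4m
    have h4m' : IsCoprime (4 : ℤ) m := ⟨u, v, huv⟩
    obtain ⟨t, ht⟩ : ∃ t : ℤ, (4:ℤ) ∣ t ^ 2 - D₀ := by
      rcases hfund with ⟨h1, -⟩ | ⟨h0, -, -⟩
      · exact ⟨1, by rw [one_pow]; omega⟩
      · exact ⟨0, by rw [zero_pow two_ne_zero]; omega⟩
    set r₀ : ℤ := t * v * m + a * r₁ * u * 4 with hr₀
    have hd1 : (4:ℤ) ∣ r₀ - t := ⟨a * r₁ * u - t * u, by linear_combination t * huv⟩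
    have hd2 : m ∣ r₀ - a * r₁ := ⟨t * v - a * r₁ * v, by linear_combination (a * r₁) * huv⟩
    have hd3 : m ∣ a * f₁ - 1 := ⟨-b, by linear_combination hab⟩
    refine ⟨r₀, ?_, ?_⟩
    · rw [Int.modEq_iff_dvd]
      have hA : (4:ℤ) ∣ r₀ ^ 2 - D₀ := by
        have e : r₀ ^ 2 - D₀ = (r₀ - t) * (r₀ + t) + (t ^ 2 - D₀) := by ring
        rw [e]; exact dvd_add (hd1.mul_right _) ht
      have hB : m ∣ r₀ ^ 2 - D₀ := by
        have e : r₀ ^ 2 - D₀ = (r₀ - a * r₁) * (r₀ + a * r₁)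
            + a ^ 2 * (r₁ ^ 2 - f₁ ^ 2 * D₀)
            + D₀ * ((a * f₁ - 1) * (a * f₁ + 1)) := by ring
        rw [e]
        exact dvd_add (dvd_add (hd2.mul_right _) (key.mul_left _))
          ((hd3.mul_right _).mul_left _)
      exact h4m'.mul_dvd hA hB
    · rw [Int.modEq_iff_dvd]
      have hm' : m ∣ f₁ * r₀ - r₁ := by
        have e : f₁ * r₀ - r₁ = f₁ * (r₀ - a * r₁) + r₁ * (a * f₁ - 1) := by ring
        rw [e]; exact dvd_add (hd2.mul_left _) (hd3.mul_left _)
      have e2 : f * r₀ - r = 2 * (f₁ * r₀ - r₁) := by rw [hf₁', hr₁]; ring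
      rw [e2]
      exact mul_dvd_mul_left 2 hm'
  · -- f odd
    obtain ⟨k, hk⟩ := hf
    have hf2 : IsCoprime f (2:ℤ) := ⟨1, -k, by linarith⟩
    have hf4 : IsCoprime f (4:ℤ) := by
      rw [show (4:ℤ) = 2 * 2 by norm_num]; exact hf2.mul_right hf2
    have hf4m : IsCoprime f (4 * m) := hf4.mul_right hfm
    obtain ⟨a, b, hab⟩ := hf4m
    refine ⟨a * r, ?_, ?_⟩
    · rw [Int.modEq_iff_dvd]
      have hd : 4 * m ∣ a * f - 1 := ⟨-b, by linear_combination hab⟩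
      have e : (a * r) ^ 2 - D₀ = a ^ 2 * (r ^ 2 - f ^ 2 * D₀)
          + D₀ * ((a * f - 1) * (a * f + 1)) := by ring
      rw [e]
      exact dvd_add (h4.mul_left _) ((hd.mul_right _).mul_left _)
    · rw [Int.modEq_iff_dvd]
      exact ⟨-2 * b * r, by linear_combination r * hab⟩
end
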